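/- Let γ ∈ (1,2) and ⟨m,n⟩_γ = m₁n₁ + γ·m₂n₂. Fix μ, dyadic N₁, N₂, N₃ with max = N¹ and fix n₁ ∈ ℤ². Then for every ε > 0, the number of pairs (n₂, n₃) ∈ ℤ² × ℤ² with |n₂| ∼ N₂, |n₃| ∼ N₃, n₂ ≠ n₁, n₂ ≠ n₃, and ⟨n₂−n₁, n₂−n₃⟩_γ = μ + O(1) is at most C_ε·(N¹)^ε·N₂·N₃. -/

import Mathlib

open Real

/-- The `γ`-bilinear form `⟨m,n⟩_γ = m₁ n₁ + γ m₂ n₂` on `ℤ²`. -/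
noncomputable def gammaInner (γ : ℝ) (m n : ℤ × ℤ) : ℝ :=
  (m.1 : ℝ) * (n.1 : ℝ) + γ * (m.2 : ℝ) * (n.2 : ℝ)

/-- Dyadic localization `|n| ∼ N`. -/
noncomputable def dyadic (N : ℝ) (n : ℤ × ℤ) : Prop :=
  N ≤ Real.sqrt ((n.1 : ℝ) ^ 2 + (n.2 : ℝ) ^ 2) ∧
    Real.sqrt ((n.1 : ℝ) ^ 2 + (n.2 : ℝ) ^ 2) ≤ 2 * N

lemma two_rpow_key {ε : ℝ} (hε : 0 < ε) (k : ℕ) :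
    (k + 1 : ℝ) ≤ max 1 (1 / (ε * Real.log 2)) * ((2 : ℝ) ^ k) ^ ε := by
  set M := max 1 (1 / (ε * Real.log 2)) with hM
  have hlog : 0 < Real.log 2 := Real.log_pos (by norm_num)
  have hc : 0 < ε * Real.log 2 := mul_pos hε hlog
  have hM1 : (1 : ℝ) ≤ M := le_max_left _ _
  have hMc : 1 ≤ M * (ε * Real.log 2) := by
    have : 1 / (ε * Real.log 2) ≤ M := le_max_right _ _
    calc (1:ℝ) = (1 / (ε * Real.log 2)) * (ε * Real.log 2) := by field_simp
    _ ≤ M * (ε * Real.log 2) := by gcongr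
  have h2 : ((2 : ℝ) ^ k) ^ ε = Real.exp (ε * (k * Real.log 2)) := by
    rw [← Real.rpow_natCast 2 k, ← Real.rpow_mul (by norm_num), Real.rpow_def_of_pos (by norm_num)]
    ring_nf
  rw [h2]
  have hexp : ε * (k * Real.log 2) + 1 ≤ Real.exp (ε * (k * Real.log 2)) :=
    Real.add_one_le_exp _
  have : (k + 1 : ℝ) ≤ M * (ε * (k * Real.log 2) + 1) := by
    have h3 : (k : ℝ) ≤ M * (ε * (k * Real.log 2)) := by
      have : (k:ℝ) * 1 ≤ (k:ℝ) * (M * (ε * Real.log 2)) := by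
        apply mul_le_mul_of_nonneg_left hMc (Nat.cast_nonneg k)
      nlinarith [Nat.cast_nonneg (α := ℝ) k]
    nlinarith
  calc (k + 1 : ℝ) ≤ M * (ε * (k * Real.log 2) + 1) := this
  _ ≤ M * Real.exp (ε * (k * Real.log 2)) := by
      apply mul_le_mul_of_nonneg_left hexp (le_trans zero_le_one hM1)

lemma prime_pow_key {ε : ℝ} (hε : 0 < ε) {p k : ℕ} (hp : p.Prime)
    {P : ℕ} (hP : ((2:ℝ) ^ (1/ε)) ≤ P) :
    (k + 1 : ℝ) ≤ (if p < P then max 1 (1 / (ε * Real.log 2)) else 1) * ((p : ℝ) ^ k) ^ ε := by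
  have hp2 : (2 : ℝ) ≤ (p : ℝ) := by exact_mod_cast hp.two_le
  have hppos : (0:ℝ) < (p:ℝ) ^ k := by positivity
  have h2k : ((2:ℝ) ^ k) ^ ε ≤ ((p:ℝ) ^ k) ^ ε := by
    apply Real.rpow_le_rpow (by positivity) (by gcongr) (le_of_lt hε)
  by_cases h : p < P
  · simp only [h, if_true]
    calc (k + 1 : ℝ) ≤ max 1 (1 / (ε * Real.log 2)) * ((2 : ℝ) ^ k) ^ ε := two_rpow_key hε k
    _ ≤ _ := by gcongr
  · simp only [h, if_false, one_mul]
    have hpP : ((2:ℝ) ^ (1/ε)) ≤ (p : ℝ) := le_trans hP (by exact_mod_cast not_lt.mp h)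
    have : ((2:ℝ) ^ (1/ε)) ^ ((k:ℝ) * ε) ≤ ((p:ℝ)) ^ ((k:ℝ) * ε) := by
      apply Real.rpow_le_rpow (by positivity) hpP (by positivity)
    have heq : ((2:ℝ) ^ (1/ε)) ^ ((k:ℝ) * ε) = (2:ℝ) ^ (k:ℕ) := by
      rw [← Real.rpow_mul (by norm_num)]
      rw [show (1/ε) * ((k:ℝ) * ε) = (k:ℝ) by field_simp]
      exact Real.rpow_natCast 2 k
    have heq2 : ((p:ℝ)) ^ ((k:ℝ) * ε) = ((p:ℝ) ^ k) ^ ε := by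
      rw [← Real.rpow_natCast (p:ℝ) k, ← Real.rpow_mul (by positivity)]
    have h2kk : (k + 1 : ℝ) ≤ (2:ℝ) ^ (k:ℕ) := by
      have := Nat.lt_two_pow_self (n := k)
      exact_mod_cast Nat.succ_le_of_lt this
    calc (k + 1 : ℝ) ≤ (2:ℝ) ^ (k:ℕ) := h2kk
    _ = ((2:ℝ) ^ (1/ε)) ^ ((k:ℝ) * ε) := heq.symm
    _ ≤ ((p:ℝ)) ^ ((k:ℝ) * ε) := this
    _ = _ := heq2

/-- The divisor bound: `d(n) ≤ C_ε n^ε`. -/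
lemma divisor_bound {ε : ℝ} (hε : 0 < ε) :
    ∃ C : ℝ, 1 ≤ C ∧ ∀ n : ℕ, n ≠ 0 → (n.divisors.card : ℝ) ≤ C * (n : ℝ) ^ ε := by
  set P : ℕ := ⌈(2:ℝ) ^ (1/ε)⌉₊ with hPdef
  set M : ℝ := max 1 (1 / (ε * Real.log 2)) with hMdef
  have hM1 : (1:ℝ) ≤ M := le_max_left _ _
  refine ⟨M ^ P, one_le_pow₀ hM1, ?_⟩
  intro n hn
  have hP : ((2:ℝ) ^ (1/ε)) ≤ (P : ℕ) := Nat.le_ceil _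
  rw [Nat.card_divisors hn]
  push_cast
  have key : ∀ p ∈ n.primeFactors,
      ((n.factorization p : ℝ) + 1) ≤ (if p < P then M else 1) * ((p : ℝ) ^ (n.factorization p)) ^ ε := by
    intro p hp
    exact prime_pow_key hε (Nat.prime_of_mem_primeFactors hp) hP
  calc (∏ p ∈ n.primeFactors, ((n.factorization p : ℝ) + 1))
      ≤ ∏ p ∈ n.primeFactors, ((if p < P then M else 1) * ((p : ℝ) ^ (n.factorization p)) ^ ε) := by
        apply Finset.prod_le_prod (fun p _ => by positivity) key
    _ = (∏ p ∈ n.primeFactors, (if p < P then M else 1)) *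
        (∏ p ∈ n.primeFactors, ((p : ℝ) ^ (n.factorization p)) ^ ε) := Finset.prod_mul_distrib
    _ ≤ M ^ P * (n : ℝ) ^ ε := by
        apply mul_le_mul
        · -- product of ite ≤ M ^ P
          rw [← Finset.prod_filter_mul_prod_filter_not n.primeFactors (· < P)]
          have h1 : (∏ p ∈ n.primeFactors.filter (· < P), (if p < P then M else (1:ℝ)))
              = M ^ (n.primeFactors.filter (· < P)).card := by
            rw [Finset.prod_congr rfl (fun p hp => if_pos (Finset.mem_filter.mp hp).2),
              Finset.prod_const]
          have h2 : (∏ p ∈ n.primeFactors.filter (fun p => ¬ (p < P)), (if p < P then M else (1:ℝ))) = 1 := by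
            rw [Finset.prod_congr rfl (fun p hp => if_neg (Finset.mem_filter.mp hp).2),
              Finset.prod_const_one]
          rw [h1, h2, mul_one]
          apply pow_le_pow_right₀ hM1
          have hsub : n.primeFactors.filter (· < P) ⊆ Finset.range P := by
            intro p hp
            exact Finset.mem_range.mpr (Finset.mem_filter.mp hp).2
          calc (n.primeFactors.filter (· < P)).card ≤ (Finset.range P).card :=
              Finset.card_le_card hsub
          _ = P := Finset.card_range P
        · -- product of rpow = n ^ ε
          have hprod : (∏ p ∈ n.primeFactors, ((p:ℝ) ^ (n.factorization p))) = (n:ℝ) := by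
            have := Nat.factorization_prod_pow_eq_self hn
            rw [Nat.prod_factorization_eq_prod_primeFactors] at this
            exact_mod_cast this
          rw [Real.finset_prod_rpow _ _ (fun p _ => by positivity) ε, hprod]
        · positivity
        · positivity
    _ = M ^ P * (n:ℝ) ^ ε := rfl

lemma ncard_le_card_of_maps {α β : Type*} (s : Set α) (f : α → β) (T : Finset β)
    (hinj : Set.InjOn f s) (hmem : ∀ x ∈ s, f x ∈ T) : s.ncard ≤ T.card := by
  rw [← Set.ncard_image_of_injOn hinj]
  have hsub : f '' s ⊆ ↑T := by rintro _ ⟨x, hx, rfl⟩; exact hmem x hx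
  calc (f '' s).ncard ≤ (↑T : Set β).ncard := Set.ncard_le_ncard hsub T.finite_toSet
  _ = T.card := Set.ncard_coe_finset T

lemma ncard_le_mul {α β γ' : Type*} [DecidableEq β] [DecidableEq γ']
    (s : Set α) (g : α → β) (h : α → γ') (T : Finset β) (F : β → Finset γ') (K : ℕ)
    (hg : ∀ x ∈ s, g x ∈ T) (hh : ∀ x ∈ s, h x ∈ F (g x)) (hK : ∀ t ∈ T, (F t).card ≤ K)
    (hinj : Set.InjOn (fun x => (g x, h x)) s) : s.ncard ≤ T.card * K := by
  have hle := ncard_le_card_of_maps s (fun x => (g x, h x))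
      (T.biUnion (fun t => (F t).image (Prod.mk t))) hinj (by
        intro x hx
        apply Finset.mem_biUnion.mpr
        exact ⟨g x, hg x hx, Finset.mem_image_of_mem _ (hh x hx)⟩)
  calc s.ncard ≤ _ := hle
  _ ≤ ∑ t ∈ T, ((F t).image (Prod.mk t)).card := Finset.card_biUnion_le
  _ ≤ ∑ t ∈ T, K := Finset.sum_le_sum (fun t ht =>
      le_trans (Finset.card_image_le) (hK t ht))
  _ = T.card * K := by rw [Finset.sum_const, smul_eq_mul]

lemma coord_abs_le {N : ℝ} {n : ℤ × ℤ} (h : dyadic N n) :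
    |(n.1 : ℝ)| ≤ 2 * N ∧ |(n.2 : ℝ)| ≤ 2 * N := by
  obtain ⟨-, h2⟩ := h
  constructor
  · calc |(n.1:ℝ)| = Real.sqrt ((n.1:ℝ)^2) := (Real.sqrt_sq_eq_abs _).symm
    _ ≤ Real.sqrt ((n.1:ℝ)^2 + (n.2:ℝ)^2) := Real.sqrt_le_sqrt (by nlinarith [sq_nonneg ((n.2:ℝ))])
    _ ≤ 2 * N := h2
  · calc |(n.2:ℝ)| = Real.sqrt ((n.2:ℝ)^2) := (Real.sqrt_sq_eq_abs _).symm
    _ ≤ Real.sqrt ((n.1:ℝ)^2 + (n.2:ℝ)^2) := Real.sqrt_le_sqrt (by nlinarith [sq_nonneg ((n.1:ℝ))])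
    _ ≤ 2 * N := h2

lemma mem_Icc_of_abs_le {x : ℤ} {B : ℝ} (h : |(x:ℝ)| ≤ B) :
    x ∈ Finset.Icc (-(⌊B⌋)) ⌊B⌋ := by
  rw [Finset.mem_Icc]
  rw [abs_le] at h
  constructor
  · rw [neg_le]
    exact Int.le_floor.mpr (by push_cast; linarith [h.1])
  · exact Int.le_floor.mpr h.2

lemma card_Icc_le {B : ℝ} (hB : 1 ≤ B) :
    ((Finset.Icc (-(⌊B⌋)) ⌊B⌋).card : ℝ) ≤ 3 * B := by
  rw [Int.card_Icc]
  have h1 : (1:ℤ) ≤ ⌊B⌋ := Int.le_floor.mpr (by exact_mod_cast hB)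
  have h2 : (⌊B⌋ + 1 - -⌊B⌋) = 2 * ⌊B⌋ + 1 := by ring
  rw [h2]
  have h3 : ((2 * ⌊B⌋ + 1).toNat : ℤ) = (2 * ⌊B⌋ + 1 : ℤ) :=
    Int.toNat_of_nonneg (by linarith)
  rw [show (((2 * ⌊B⌋ + 1).toNat : ℕ) : ℝ) = (((2 * ⌊B⌋ + 1).toNat : ℤ) : ℝ) by push_cast; ring, h3]
  push_cast
  have := Int.floor_le B
  linarith

/-- Finset of factorizations of `G` into two integers. -/
def mulPairs (G : ℤ) : Finset (ℤ × ℤ) :=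
  G.natAbs.divisors.biUnion (fun e => {((e:ℤ), G / (e:ℤ)), (-(e:ℤ), G / (-(e:ℤ)))})

lemma mulPairs_card (G : ℤ) : (mulPairs G).card ≤ 2 * G.natAbs.divisors.card := by
  calc (mulPairs G).card ≤ ∑ e ∈ G.natAbs.divisors,
      (({((e:ℤ), G / (e:ℤ)), (-(e:ℤ), G / (-(e:ℤ)))} : Finset (ℤ × ℤ))).card :=
      Finset.card_biUnion_le
  _ ≤ ∑ e ∈ G.natAbs.divisors, 2 := Finset.sum_le_sum (fun e _ =>
      le_trans (Finset.card_insert_le _ _) (by simp))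
  _ = 2 * G.natAbs.divisors.card := by rw [Finset.sum_const, smul_eq_mul, mul_comm]

lemma mem_mulPairs {a b G : ℤ} (hG : G ≠ 0) (hab : a * b = G) : (a, b) ∈ mulPairs G := by
  have ha : a ≠ 0 := by rintro rfl; simp at hab; exact hG hab.symm
  have hdvd : a ∣ G := ⟨b, hab.symm⟩
  have hmem : a.natAbs ∈ G.natAbs.divisors := Nat.mem_divisors.mpr
    ⟨Int.natAbs_dvd_natAbs.mpr hdvd, Int.natAbs_ne_zero.mpr hG⟩
  apply Finset.mem_biUnion.mpr
  refine ⟨a.natAbs, hmem, ?_⟩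
  have hb : b = G / a := by rw [← hab, Int.mul_ediv_cancel_left _ ha]
  rcases Int.natAbs_eq a with h | h
  · apply Finset.mem_insert.mpr; left
    rw [← h, hb]
  · apply Finset.mem_insert.mpr; right
    apply Finset.mem_singleton.mpr
    have ha' : -((a.natAbs : ℤ)) = a := by omega
    rw [ha', hb]


lemma abs_le_of_mem_Icc {x : ℤ} {B : ℝ} (h : x ∈ Finset.Icc (-(⌊B⌋)) ⌊B⌋) :
    |(x:ℝ)| ≤ B := by
  rw [Finset.mem_Icc] at h
  rw [abs_le]
  constructor
  · have h1 : ((-⌊B⌋ : ℤ) : ℝ) ≤ (x:ℝ) := by exact_mod_cast h.1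
    have h2 := Int.floor_le B
    push_cast at h1
    linarith
  · have h1 : ((x:ℤ) : ℝ) ≤ ((⌊B⌋ : ℤ) : ℝ) := by exact_mod_cast h.2
    have h2 := Int.floor_le B
    linarith

noncomputable def W (c : ℝ) : Finset ℤ := Finset.Icc ⌈c - 1⌉ ⌊c + 1⌋

lemma window_card (c : ℝ) : (W c).card ≤ 3 := by
  rw [W, Int.card_Icc]
  have h : (⌊c + 1⌋ + 1 - ⌈c - 1⌉ : ℤ) ≤ 3 := by
    have h1 := Int.floor_le (c + 1)
    have h2 := Int.le_ceil (c - 1)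
    have : ((⌊c + 1⌋ + 1 - ⌈c - 1⌉ : ℤ) : ℝ) ≤ 3 := by push_cast; linarith
    exact_mod_cast this
  omega

lemma window_mem {c : ℝ} {m : ℤ} (h : |(m:ℝ) - c| ≤ 1) : m ∈ W c := by
  rw [abs_le] at h
  rw [W, Finset.mem_Icc]
  exact ⟨Int.ceil_le.mpr (by linarith), Int.le_floor.mpr (by push_cast; linarith)⟩

set_option maxHeartbeats 1000000

/-- Strong counting lemma: for every `ε > 0` there is `C_ε` so that for `γ ∈ (1,2)`,
`|μ| = O(N¹)` with `N¹ = max(N₁,N₂,N₃)`, and any fixed `n₁` with `|n₁| ∼ N₁`, the number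
of pairs `(n₂, n₃)` with `|n₂| ∼ N₂`, `|n₃| ∼ N₃`, `n₂ ≠ n₁`, `n₂ ≠ n₃` and
`⟨n₂-n₁, n₂-n₃⟩_γ = μ + O(1)` is at most `C_ε · (N¹)^ε · N₂ · N₃`. -/
theorem strong_counting :
    ∀ ε : ℝ, 0 < ε → ∃ C : ℝ, 0 < C ∧ ∀ γ : ℝ, 1 < γ → γ < 2 →
      ∀ N₁ N₂ N₃ μ : ℝ, 1 ≤ N₁ → 1 ≤ N₂ → 1 ≤ N₃ → |μ| ≤ max N₁ (max N₂ N₃) →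
      ∀ n₁ : ℤ × ℤ, dyadic N₁ n₁ →
        (Set.ncard {p : (ℤ × ℤ) × (ℤ × ℤ) | dyadic N₂ p.1 ∧ dyadic N₃ p.2 ∧
            p.1 ≠ n₁ ∧ p.1 ≠ p.2 ∧
            |gammaInner γ (p.1 - n₁) (p.1 - p.2) - μ| ≤ 1} : ℝ)
          ≤ C * (max N₁ (max N₂ N₃)) ^ ε * N₂ * N₃ := by
  intro ε hε
  obtain ⟨Cd, hCd1, hCd⟩ := divisor_bound (half_pos hε)
  refine ⟨216 * Cd * (34:ℝ) ^ (ε/2) + 252, by positivity, ?_⟩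
  intro γ hγ1 hγ2 N₁ N₂ N₃ μ hN₁ hN₂ hN₃ hμ n₁ hn₁
  set N : ℝ := max N₁ (max N₂ N₃) with hNdef
  have hN1 : (1:ℝ) ≤ N := le_trans hN₁ (le_max_left _ _)
  have hN2N : N₂ ≤ N := le_trans (le_max_left _ _) (le_max_right _ _)
  have hN3N : N₃ ≤ N := le_trans (le_max_right _ _) (le_max_right _ _)
  have hN1N : N₁ ≤ N := le_max_left _ _
  have hNe : (1:ℝ) ≤ N ^ ε := Real.one_le_rpow hN1 (le_of_lt hε)
  have hγ0 : (0:ℝ) < γ := lt_trans one_pos hγ1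
  set S : Set ((ℤ × ℤ) × (ℤ × ℤ)) := {p : (ℤ × ℤ) × (ℤ × ℤ) | dyadic N₂ p.1 ∧ dyadic N₃ p.2 ∧
            p.1 ≠ n₁ ∧ p.1 ≠ p.2 ∧
            |gammaInner γ (p.1 - n₁) (p.1 - p.2) - μ| ≤ 1} with hSdef
  -- coordinate Finsets
  set I₂ : Finset ℤ := Finset.Icc (-(⌊2*N₂⌋)) ⌊2*N₂⌋ with hI2def
  set I₃ : Finset ℤ := Finset.Icc (-(⌊2*N₃⌋)) ⌊2*N₃⌋ with hI3def
  have hI2card : (I₂.card : ℝ) ≤ 6 * N₂ := by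
    have := card_Icc_le (B := 2*N₂) (by linarith); rw [hI2def]; linarith
  have hI3card : (I₃.card : ℝ) ≤ 6 * N₃ := by
    have := card_Icc_le (B := 2*N₃) (by linarith); rw [hI3def]; linarith
  -- basic coordinate facts for members of S
  have hmem2 : ∀ p ∈ S, p.1.1 ∈ I₂ ∧ p.1.2 ∈ I₂ ∧ p.2.1 ∈ I₃ ∧ p.2.2 ∈ I₃ := by
    intro p hp
    obtain ⟨hd2, hd3, -, -, -⟩ := hp
    obtain ⟨h21, h22⟩ := coord_abs_le hd2
    obtain ⟨h31, h32⟩ := coord_abs_le hd3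
    exact ⟨mem_Icc_of_abs_le h21, mem_Icc_of_abs_le h22,
      mem_Icc_of_abs_le h31, mem_Icc_of_abs_le h32⟩
  have hn₁c := coord_abs_le hn₁
  -- the constraint in coordinates
  have hconstraint : ∀ p ∈ S,
      |((p.1.1 - n₁.1 : ℤ) : ℝ) * ((p.1.1 - p.2.1 : ℤ) : ℝ)
        + γ * ((p.1.2 - n₁.2 : ℤ) : ℝ) * ((p.1.2 - p.2.2 : ℤ) : ℝ) - μ| ≤ 1 := by
    intro p hp
    have h5 := hp.2.2.2.2
    simpa [gammaInner, Prod.fst_sub, Prod.snd_sub] using h5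
  -- divisor count bound
  set Mb : ℕ := ⌊34 * N^2⌋₊ with hMbdef
  set Dmax : ℕ := (Finset.Icc 1 Mb).sup (fun m => m.divisors.card) with hDdef
  have hMb1 : 1 ≤ Mb := by
    apply Nat.le_floor
    push_cast
    nlinarith
  have hDmax : (Dmax : ℝ) ≤ Cd * (34:ℝ) ^ (ε/2) * N ^ ε := by
    obtain ⟨m, hm, hDm⟩ := Finset.exists_mem_eq_sup (Finset.Icc 1 Mb)
      ⟨1, Finset.mem_Icc.mpr ⟨le_refl 1, hMb1⟩⟩ (fun m => m.divisors.card)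
    rw [hDdef, hDm]
    obtain ⟨hm1, hm2⟩ := Finset.mem_Icc.mp hm
    have hmN : (m : ℝ) ≤ 34 * N^2 := by
      calc (m:ℝ) ≤ (Mb : ℝ) := by exact_mod_cast hm2
      _ ≤ 34 * N^2 := Nat.floor_le (by positivity)
    calc ((m.divisors.card : ℕ) : ℝ) ≤ Cd * (m:ℝ) ^ (ε/2) := hCd m (by omega)
    _ ≤ Cd * (34 * N^2) ^ (ε/2) := by
        apply mul_le_mul_of_nonneg_left _ (by linarith)
        apply Real.rpow_le_rpow (by positivity) hmN (by positivity)
    _ = Cd * (34:ℝ) ^ (ε/2) * N ^ ε := by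
        rw [Real.mul_rpow (by norm_num) (by positivity)]
        rw [← Real.rpow_natCast N 2, ← Real.rpow_mul (by positivity)]
        ring_nf
  -- mulPairs cards in windows
  have hmp : ∀ (c : ℝ), |c| ≤ 33 * N^2 → ∀ G ∈ W c,
      (mulPairs G).card ≤ 2 * Dmax := by
    intro c hc G hG
    rw [W, Finset.mem_Icc] at hG
    by_cases hG0 : G = 0
    · subst hG0
      simp [mulPairs]
    · calc (mulPairs G).card ≤ 2 * G.natAbs.divisors.card := mulPairs_card G
      _ ≤ 2 * Dmax := by
          apply Nat.mul_le_mul_left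
          rw [hDdef]
          have hmemb : G.natAbs ∈ Finset.Icc 1 Mb := by
            rw [Finset.mem_Icc]
            constructor
            · omega
            · -- G.natAbs ≤ Mb
              apply Nat.le_floor
              obtain ⟨hG1, hG2⟩ := hG
              have e1 : ((G:ℝ)) ≤ c + 1 := by
                calc ((G:ℝ)) ≤ ((⌊c+1⌋ : ℤ):ℝ) := by exact_mod_cast hG2
                _ ≤ c + 1 := Int.floor_le _
              have e2 : c - 1 ≤ ((G:ℝ)) := by
                calc c - 1 ≤ ((⌈c-1⌉ : ℤ):ℝ) := Int.le_ceil _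
                _ ≤ (G:ℝ) := by exact_mod_cast hG1
              have habs : |(G:ℝ)| ≤ 34 * N^2 := by
                rw [abs_le] at hc ⊢
                constructor <;> nlinarith
              rw [Nat.cast_natAbs, Int.cast_abs]
              exact habs
          exact Finset.le_sup (f := fun m => m.divisors.card) hmemb
  have hmpW : ∀ (c : ℝ), |c| ≤ 33 * N^2 → ((W c).biUnion mulPairs).card ≤ 3 * (2 * Dmax) := by
    intro c hc
    calc ((W c).biUnion mulPairs).card ≤ ∑ G ∈ W c, (mulPairs G).card := Finset.card_biUnion_le
    _ ≤ ∑ _G ∈ W c, (2 * Dmax) := Finset.sum_le_sum (hmp c hc)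
    _ = (W c).card * (2 * Dmax) := by rw [Finset.sum_const, smul_eq_mul]
    _ ≤ 3 * (2 * Dmax) := Nat.mul_le_mul_right _ (window_card _)
  -- case A
  set cA : ℤ × ℤ → ℝ := fun t => μ - γ * ((t.1:ℝ) - (n₁.2:ℝ)) * ((t.1:ℝ) - (t.2:ℝ)) with hcAdef
  have hcAbd : ∀ t ∈ I₂ ×ˢ I₃, |cA t| ≤ 33 * N^2 := by
    intro t ht
    obtain ⟨ht1, ht2⟩ := Finset.mem_product.mp ht
    have hb1 : |((t.1:ℤ):ℝ)| ≤ 2 * N₂ := abs_le_of_mem_Icc ht1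
    have hb2 : |((t.2:ℤ):ℝ)| ≤ 2 * N₃ := abs_le_of_mem_Icc ht2
    have h1 := hn₁c.2
    have e1 : |(t.1:ℝ) - (n₁.2:ℝ)| ≤ 4*N := by
      calc |(t.1:ℝ) - (n₁.2:ℝ)| ≤ |(t.1:ℝ)| + |(n₁.2:ℝ)| := abs_sub _ _
      _ ≤ 2*N₂ + 2*N₁ := add_le_add hb1 h1
      _ ≤ 4*N := by linarith
    have e2 : |(t.1:ℝ) - (t.2:ℝ)| ≤ 4*N := by
      calc |(t.1:ℝ) - (t.2:ℝ)| ≤ |(t.1:ℝ)| + |(t.2:ℝ)| := abs_sub _ _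
      _ ≤ 2*N₂ + 2*N₃ := add_le_add hb1 hb2
      _ ≤ 4*N := by linarith
    have e3 : |γ * ((t.1:ℝ) - (n₁.2:ℝ)) * ((t.1:ℝ) - (t.2:ℝ))| ≤ 32 * N^2 := by
      rw [abs_mul, abs_mul, abs_of_pos hγ0]
      have g1 : γ * |(t.1:ℝ) - (n₁.2:ℝ)| ≤ 2 * (4*N) :=
        mul_le_mul (le_of_lt hγ2) e1 (abs_nonneg _) (by norm_num)
      have g2 : γ * |(t.1:ℝ) - (n₁.2:ℝ)| * |(t.1:ℝ) - (t.2:ℝ)| ≤ (2 * (4*N)) * (4*N) :=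
        mul_le_mul g1 e2 (abs_nonneg _) (by positivity)
      nlinarith [g2]
    simp only [hcAdef]
    calc |μ - γ * ((t.1:ℝ) - (n₁.2:ℝ)) * ((t.1:ℝ) - (t.2:ℝ))|
        ≤ |μ| + |γ * ((t.1:ℝ) - (n₁.2:ℝ)) * ((t.1:ℝ) - (t.2:ℝ))| := abs_sub _ _
    _ ≤ N + 32 * N^2 := add_le_add hμ e3
    _ ≤ 33 * N^2 := by nlinarith [mul_le_mul_of_nonneg_left hN1 (le_trans zero_le_one hN1)]
  set SA : Set ((ℤ × ℤ) × (ℤ × ℤ)) := {p | p ∈ S ∧ (p.1.1 - n₁.1) * (p.1.1 - p.2.1) ≠ 0} with hSAdef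
  have hA : SA.ncard ≤ (I₂ ×ˢ I₃).card * (3 * (2 * Dmax)) := by
    apply ncard_le_mul SA (fun p => (p.1.2, p.2.2)) (fun p => (p.1.1 - n₁.1, p.1.1 - p.2.1))
      (I₂ ×ˢ I₃) (fun t => (W (cA t)).biUnion mulPairs) (3 * (2 * Dmax))
    · intro p hp
      obtain ⟨h1, h2, h3, h4⟩ := hmem2 p hp.1
      exact Finset.mem_product.mpr ⟨h2, h4⟩
    · intro p hp
      apply Finset.mem_biUnion.mpr
      refine ⟨(p.1.1 - n₁.1) * (p.1.1 - p.2.1), ?_, mem_mulPairs hp.2 rfl⟩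
      apply window_mem
      have hcon := hconstraint p hp.1
      have heq : ((((p.1.1 - n₁.1) * (p.1.1 - p.2.1) : ℤ)) : ℝ) - cA (p.1.2, p.2.2)
          = ((p.1.1 - n₁.1 : ℤ) : ℝ) * ((p.1.1 - p.2.1 : ℤ) : ℝ)
            + γ * ((p.1.2 - n₁.2 : ℤ) : ℝ) * ((p.1.2 - p.2.2 : ℤ) : ℝ) - μ := by
        rw [hcAdef]; push_cast; ring
      rw [heq]
      exact hcon
    · intro t ht
      exact hmpW (cA t) (hcAbd t ht)
    · rintro ⟨⟨a1,a2⟩,a3,a4⟩ hp ⟨⟨b1,b2⟩,b3,b4⟩ hq heq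
      simp only [Prod.mk.injEq] at heq ⊢
      omega
  have hAR : (SA.ncard : ℝ) ≤ 216 * Cd * (34:ℝ)^(ε/2) * N^ε * N₂ * N₃ := by
    have h0 : (SA.ncard : ℝ) ≤ ((I₂ ×ˢ I₃).card * (3 * (2 * Dmax)) : ℕ) := by exact_mod_cast hA
    rw [Finset.card_product] at h0
    push_cast at h0
    calc (SA.ncard : ℝ) ≤ (I₂.card : ℝ) * (I₃.card) * (3 * (2 * Dmax)) := h0
    _ ≤ (6*N₂) * (6*N₃) * (3 * (2 * (Cd * (34:ℝ)^(ε/2) * N^ε))) := by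
        apply mul_le_mul
        · apply mul_le_mul hI2card hI3card (Nat.cast_nonneg _) (by linarith)
        · have h1 := hDmax
          have h2 : (0:ℝ) ≤ (Dmax:ℝ) := Nat.cast_nonneg _
          nlinarith
        · positivity
        · positivity
    _ = 216 * Cd * (34:ℝ)^(ε/2) * N^ε * N₂ * N₃ := by ring
  -- case B : u₁ = 0
  set cB : ℤ × ℤ → ℝ := fun t => μ / (γ * ((t.1:ℝ) - (n₁.2:ℝ))) with hcBdef
  set SB : Set ((ℤ × ℤ) × (ℤ × ℤ)) := {p | p ∈ S ∧ p.1.1 - n₁.1 = 0} with hSBdef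
  have hB : SB.ncard ≤ (I₂ ×ˢ I₃).card * 3 := by
    apply ncard_le_mul SB (fun p => (p.1.2, p.2.1)) (fun p => p.1.2 - p.2.2)
      (I₂ ×ˢ I₃) (fun t => W (cB t)) 3
    · intro p hp
      obtain ⟨h1, h2, h3, h4⟩ := hmem2 p hp.1
      exact Finset.mem_product.mpr ⟨h2, h3⟩
    · intro p hp
      obtain ⟨hpS, hu1⟩ := hp
      have hu2 : p.1.2 - n₁.2 ≠ 0 := by
        intro h0
        apply hpS.2.2.1
        exact Prod.ext (by omega) (by omega)
      have hcon := hconstraint p hpS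
      rw [hu1] at hcon
      have hcon2 : |γ * ((p.1.2 - n₁.2 : ℤ):ℝ) * ((p.1.2 - p.2.2 : ℤ):ℝ) - μ| ≤ 1 := by
        simpa using hcon
      apply window_mem
      have habs1 : (1:ℝ) ≤ |γ * ((p.1.2 - n₁.2 : ℤ):ℝ)| := by
        rw [abs_mul, abs_of_pos hγ0]
        have h1 : (1:ℝ) ≤ |((p.1.2 - n₁.2 : ℤ):ℝ)| := by
          rw [← Int.cast_abs]
          exact_mod_cast Int.one_le_abs hu2
        nlinarith
      have hne : γ * ((p.1.2 - n₁.2 : ℤ):ℝ) ≠ 0 := by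
        intro h0
        rw [h0, abs_zero] at habs1
        linarith
      have hne' : γ * ((p.1.2:ℝ) - (n₁.2:ℝ)) ≠ 0 := by push_cast at hne; exact hne
      have heq : ((p.1.2 - p.2.2 : ℤ):ℝ) - cB (p.1.2, p.2.1)
          = (γ * ((p.1.2 - n₁.2 : ℤ):ℝ) * ((p.1.2 - p.2.2 : ℤ):ℝ) - μ)
            / (γ * ((p.1.2 - n₁.2 : ℤ):ℝ)) := by
        simp only [hcBdef]
        push_cast
        rw [sub_div, mul_div_cancel_left₀ _ hne']
      rw [heq, abs_div, div_le_one (lt_of_lt_of_le zero_lt_one habs1)]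
      exact le_trans hcon2 habs1
    · intro t ht
      exact window_card _
    · rintro ⟨⟨a1,a2⟩,a3,a4⟩ hp ⟨⟨b1,b2⟩,b3,b4⟩ hq heq
      simp only [hSBdef, Set.mem_setOf_eq] at hp hq
      have hp2 := hp.2
      have hq2 := hq.2
      simp only [Prod.mk.injEq] at heq ⊢
      omega
  have hBR : (SB.ncard : ℝ) ≤ 108 * N₂ * N₃ := by
    have h0 : (SB.ncard : ℝ) ≤ ((I₂ ×ˢ I₃).card * 3 : ℕ) := by exact_mod_cast hB
    rw [Finset.card_product] at h0
    push_cast at h0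
    calc (SB.ncard : ℝ) ≤ (I₂.card : ℝ) * (I₃.card) * 3 := h0
    _ ≤ (6*N₂) * (6*N₃) * 3 := by
        apply mul_le_mul _ (le_refl 3) (by norm_num) (by positivity)
        apply mul_le_mul hI2card hI3card (Nat.cast_nonneg _) (by linarith)
    _ = 108 * N₂ * N₃ := by ring
  -- case C : v₁ = 0, u₂ ≠ 0
  set cC : ℤ × ℤ → ℝ := fun t => μ / (γ * ((t.2:ℝ) - (n₁.2:ℝ))) with hcCdef
  set SC : Set ((ℤ × ℤ) × (ℤ × ℤ)) :=
    {p | p ∈ S ∧ p.1.1 - p.2.1 = 0 ∧ p.1.2 - n₁.2 ≠ 0} with hSCdef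
  have hC : SC.ncard ≤ (I₃ ×ˢ I₂).card * 3 := by
    apply ncard_le_mul SC (fun p => (p.1.1, p.1.2)) (fun p => p.1.2 - p.2.2)
      (I₃ ×ˢ I₂) (fun t => W (cC t)) 3
    · intro p hp
      obtain ⟨h1, h2, h3, h4⟩ := hmem2 p hp.1
      have he : p.1.1 = p.2.1 := by have := hp.2.1; omega
      exact Finset.mem_product.mpr ⟨he ▸ h3, h2⟩
    · intro p hp
      obtain ⟨hpS, hv1, hu2⟩ := hp
      have hcon := hconstraint p hpS
      rw [hv1] at hcon
      have hcon2 : |γ * ((p.1.2 - n₁.2 : ℤ):ℝ) * ((p.1.2 - p.2.2 : ℤ):ℝ) - μ| ≤ 1 := by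
        simpa using hcon
      apply window_mem
      have habs1 : (1:ℝ) ≤ |γ * ((p.1.2 - n₁.2 : ℤ):ℝ)| := by
        rw [abs_mul, abs_of_pos hγ0]
        have h1 : (1:ℝ) ≤ |((p.1.2 - n₁.2 : ℤ):ℝ)| := by
          rw [← Int.cast_abs]
          exact_mod_cast Int.one_le_abs hu2
        nlinarith
      have hne : γ * ((p.1.2 - n₁.2 : ℤ):ℝ) ≠ 0 := by
        intro h0
        rw [h0, abs_zero] at habs1
        linarith
      have hne' : γ * ((p.1.2:ℝ) - (n₁.2:ℝ)) ≠ 0 := by push_cast at hne; exact hne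
      have heq : ((p.1.2 - p.2.2 : ℤ):ℝ) - cC (p.1.1, p.1.2)
          = (γ * ((p.1.2 - n₁.2 : ℤ):ℝ) * ((p.1.2 - p.2.2 : ℤ):ℝ) - μ)
            / (γ * ((p.1.2 - n₁.2 : ℤ):ℝ)) := by
        simp only [hcCdef]
        push_cast
        rw [sub_div, mul_div_cancel_left₀ _ hne']
      rw [heq, abs_div, div_le_one (lt_of_lt_of_le zero_lt_one habs1)]
      exact le_trans hcon2 habs1
    · intro t ht
      exact window_card _
    · rintro ⟨⟨a1,a2⟩,a3,a4⟩ hp ⟨⟨b1,b2⟩,b3,b4⟩ hq heq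
      simp only [hSCdef, Set.mem_setOf_eq] at hp hq
      have hp2 := hp.2.1
      have hq2 := hq.2.1
      simp only [Prod.mk.injEq] at heq ⊢
      omega
  have hCR : (SC.ncard : ℝ) ≤ 108 * N₂ * N₃ := by
    have h0 : (SC.ncard : ℝ) ≤ ((I₃ ×ˢ I₂).card * 3 : ℕ) := by exact_mod_cast hC
    rw [Finset.card_product] at h0
    push_cast at h0
    calc (SC.ncard : ℝ) ≤ (I₃.card : ℝ) * (I₂.card) * 3 := h0
    _ ≤ (6*N₃) * (6*N₂) * 3 := by
        apply mul_le_mul _ (le_refl 3) (by norm_num) (by positivity)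
        apply mul_le_mul hI3card hI2card (Nat.cast_nonneg _) (by linarith)
    _ = 108 * N₂ * N₃ := by ring
  -- case D : v₁ = 0, u₂ = 0
  set SD : Set ((ℤ × ℤ) × (ℤ × ℤ)) :=
    {p | p ∈ S ∧ p.1.1 - p.2.1 = 0 ∧ p.1.2 - n₁.2 = 0} with hSDdef
  have hD : SD.ncard ≤ I₂.card * I₃.card := by
    apply ncard_le_mul SD (fun p => p.1.1) (fun p => p.2.2) I₂ (fun _ => I₃) I₃.card
    · intro p hp
      exact (hmem2 p hp.1).1
    · intro p hp
      exact (hmem2 p hp.1).2.2.2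
    · intro t ht
      exact le_refl _
    · rintro ⟨⟨a1,a2⟩,a3,a4⟩ hp ⟨⟨b1,b2⟩,b3,b4⟩ hq heq
      simp only [hSDdef, Set.mem_setOf_eq] at hp hq
      have hp2 := hp.2
      have hq2 := hq.2
      simp only [Prod.mk.injEq] at heq ⊢
      omega
  have hDR : (SD.ncard : ℝ) ≤ 36 * N₂ * N₃ := by
    have h0 : (SD.ncard : ℝ) ≤ (I₂.card * I₃.card : ℕ) := by exact_mod_cast hD
    push_cast at h0
    calc (SD.ncard : ℝ) ≤ (I₂.card : ℝ) * (I₃.card) := h0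
    _ ≤ (6*N₂) * (6*N₃) := mul_le_mul hI2card hI3card (Nat.cast_nonneg _) (by linarith)
    _ = 36 * N₂ * N₃ := by ring
  -- covering
  have hcover : S ⊆ SA ∪ SB ∪ SC ∪ SD := by
    intro p hp
    by_cases h1 : (p.1.1 - n₁.1) * (p.1.1 - p.2.1) ≠ 0
    · exact Or.inl (Or.inl (Or.inl ⟨hp, h1⟩))
    · push_neg at h1
      rcases mul_eq_zero.mp h1 with h2 | h2
      · exact Or.inl (Or.inl (Or.inr ⟨hp, h2⟩))
      · by_cases h3 : p.1.2 - n₁.2 = 0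
        · exact Or.inr ⟨hp, h2, h3⟩
        · exact Or.inl (Or.inr ⟨hp, h2, h3⟩)
  have hS4 : S.ncard ≤ SA.ncard + SB.ncard + SC.ncard + SD.ncard := by
    have hSfin : S.Finite := by
      apply Set.Finite.subset (((I₂ ×ˢ I₂) ×ˢ (I₃ ×ˢ I₃)).finite_toSet)
      intro p hp
      obtain ⟨h1, h2, h3, h4⟩ := hmem2 p hp
      simp only [Finset.coe_product, Set.mem_prod, Finset.mem_coe]
      exact ⟨⟨h1, h2⟩, h3, h4⟩
    have hUfin : (SA ∪ SB ∪ SC ∪ SD).Finite := by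
      apply hSfin.subset
      intro p hp
      rcases hp with ((h | h) | h) | h
      · exact h.1
      · exact h.1
      · exact h.1
      · exact h.1
    calc S.ncard ≤ (SA ∪ SB ∪ SC ∪ SD).ncard := Set.ncard_le_ncard hcover hUfin
    _ ≤ (SA ∪ SB ∪ SC).ncard + SD.ncard := Set.ncard_union_le _ _
    _ ≤ (SA ∪ SB).ncard + SC.ncard + SD.ncard := by
        have := Set.ncard_union_le (SA ∪ SB) SC
        omega
    _ ≤ SA.ncard + SB.ncard + SC.ncard + SD.ncard := by
        have := Set.ncard_union_le SA SB
        omega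
  -- final assembly
  have hcast : (S.ncard : ℝ) ≤ (SA.ncard : ℝ) + SB.ncard + SC.ncard + SD.ncard := by
    exact_mod_cast hS4
  have hprod : (0:ℝ) ≤ N₂ * N₃ := by positivity
  have key : N₂ * N₃ ≤ N ^ ε * N₂ * N₃ := by nlinarith [hNe, hprod]
  calc (S.ncard : ℝ) ≤ (SA.ncard : ℝ) + SB.ncard + SC.ncard + SD.ncard := hcast
  _ ≤ 216 * Cd * (34:ℝ)^(ε/2) * N^ε * N₂ * N₃ + 108 * N₂ * N₃ + 108 * N₂ * N₃
      + 36 * N₂ * N₃ := by linarith [hAR, hBR, hCR, hDR]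
  _ ≤ (216 * Cd * (34:ℝ)^(ε/2) + 252) * N ^ ε * N₂ * N₃ := by nlinarith [key]
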